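/- Let u : 𝕋 → ℝ be bounded, continuous off the point 1 ∈ 𝕋, with u(e^{it}) > 3δ > 0 for t ∈ (0, t₀) and 0 < u(e^{−it}) < δ for t ∈ (0, t₀), for some δ, t₀ > 0. Then lim_{r→1⁻} (1/2π) ∫_𝕋 Im((e^{it}+r)/(e^{it}−r)) u(e^{it}) dt = −∞. -/

import Mathlib

open Set Filter Real MeasureTheory intervalIntegral

lemma Dpos' {r : ℝ} (hr0 : 0 ≤ r) (hr1 : r < 1) (t : ℝ) :
    0 < 1 - 2*r*Real.cos t + r^2 := by
  nlinarith [sq_nonneg (1-r), Real.cos_le_one t]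

lemma kernel_eq' {r : ℝ} (hr0 : 0 ≤ r) (hr1 : r < 1) (t : ℝ) :
    ((Complex.exp (t * Complex.I) + (r:ℂ)) /
      (Complex.exp (t * Complex.I) - (r:ℂ))).im
      = (-(2*r*Real.sin t)) / (1 - 2*r*Real.cos t + r^2) := by
  have hD := Dpos' hr0 hr1 t
  have he : Complex.exp (↑t * Complex.I) = Complex.cos t + Complex.sin t * Complex.I :=
    Complex.exp_mul_I _
  rw [he, Complex.div_im]
  have h1 : Complex.normSq (Complex.cos ↑t + Complex.sin ↑t * Complex.I - ↑r)
      = 1 - 2*r*Real.cos t + r^2 := by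
    simp [Complex.normSq_apply, Complex.cos_ofReal_re, Complex.sin_ofReal_re,
      Complex.add_re, Complex.add_im, Complex.sub_re, Complex.sub_im, Complex.mul_re,
      Complex.mul_im, Complex.I_re, Complex.I_im, Complex.ofReal_re, Complex.ofReal_im,
      Complex.cos_ofReal_im, Complex.sin_ofReal_im]
    ring_nf
    nlinarith [Real.sin_sq_add_cos_sq t]
  rw [h1]
  simp [Complex.add_re, Complex.add_im, Complex.sub_re, Complex.sub_im, Complex.mul_re,
    Complex.mul_im, Complex.I_re, Complex.I_im, Complex.ofReal_re, Complex.ofReal_im,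
    Complex.cos_ofReal_re, Complex.sin_ofReal_re, Complex.cos_ofReal_im, Complex.sin_ofReal_im]
  ring

lemma hasDeriv_logD' {r : ℝ} (hr0 : 0 ≤ r) (hr1 : r < 1) (t : ℝ) :
    HasDerivAt (fun s => Real.log (1 - 2*r*Real.cos s + r^2))
      (2*r*Real.sin t / (1 - 2*r*Real.cos t + r^2)) t := by
  have hD := Dpos' hr0 hr1 t
  have h1 : HasDerivAt (fun s => 1 - 2*r*Real.cos s + r^2) (2*r*Real.sin t) t := by
    have := ((Real.hasDerivAt_cos t).const_mul (2*r)).const_sub 1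
    simpa [mul_comm, mul_assoc, mul_neg] using (this.add_const (r^2))
  simpa using h1.log hD.ne'

lemma Pcont' {r : ℝ} (hr0 : 0 ≤ r) (hr1 : r < 1) :
    Continuous (fun t => 2*r*Real.sin t / (1 - 2*r*Real.cos t + r^2)) := by
  apply Continuous.div (by fun_prop) (by fun_prop)
  exact fun t => (Dpos' hr0 hr1 t).ne'

lemma intP' {r : ℝ} (hr0 : 0 ≤ r) (hr1 : r < 1) (a b : ℝ) :
    ∫ t in a..b, 2*r*Real.sin t / (1 - 2*r*Real.cos t + r^2)
      = Real.log (1 - 2*r*Real.cos b + r^2) - Real.log (1 - 2*r*Real.cos a + r^2) :=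
  intervalIntegral.integral_eq_sub_of_hasDerivAt
    (fun t _ => hasDeriv_logD' hr0 hr1 t)
    ((Pcont' hr0 hr1).intervalIntegrable a b)

lemma umeas' (u : ℝ → ℝ) (hper : Function.Periodic u (2 * π))
    (hcont : ContinuousOn u (Set.Ioo 0 (2 * π))) :
    AEStronglyMeasurable u (volume.restrict (Ioc (-π) π)) := by
  have hpi := Real.pi_pos
  have hcneg : ContinuousOn u (Ioo (-(2*π)) 0) := by
    have h1 : ContinuousOn (fun y => u (y + 2*π)) (Ioo (-(2*π)) 0) := by
      apply hcont.comp (by fun_prop)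
      intro y hy
      simp only [mem_Ioo] at hy ⊢
      constructor <;> linarith [hy.1, hy.2]
    exact h1.congr fun y _ => (hper y).symm
  set s : Set ℝ := Ioo (-(2*π)) 0 ∪ Ioo 0 (2*π) with hs
  have hcont2 : ContinuousOn u s := by
    intro x hx
    rcases hx with hx | hx
    · exact ((hcneg.continuousAt (isOpen_Ioo.mem_nhds hx)).continuousWithinAt)
    · exact ((hcont.continuousAt (isOpen_Ioo.mem_nhds hx)).continuousWithinAt)
  have hmeas : AEStronglyMeasurable u (volume.restrict s) :=
    hcont2.aestronglyMeasurable (measurableSet_Ioo.union measurableSet_Ioo)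
  have hsub : (Ioc (-π) π ∩ s : Set ℝ) =ᵐ[volume] (Ioc (-π) π : Set ℝ) := by
    rw [MeasureTheory.ae_eq_set]
    constructor
    · exact measure_mono_null (fun x hx => (hx.2 hx.1.1).elim) measure_empty
    · have h0 : Ioc (-π) π \ (Ioc (-π) π ∩ s) ⊆ {0} := by
        intro x hx
        by_contra h
        exact hx.2 ⟨hx.1, by
          rcases lt_or_gt_of_ne h with h' | h'
          · exact Or.inl ⟨by linarith [hx.1.1], h'⟩
          · exact Or.inr ⟨h', by linarith [hx.1.2]⟩⟩
      exact measure_mono_null h0 (measure_singleton 0)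
  rw [← Measure.restrict_congr_set hsub]
  exact hmeas.mono_measure (Measure.restrict_mono inter_subset_right le_rfl)

set_option maxHeartbeats 1000000 in
theorem stmt_12 (u : ℝ → ℝ) (hper : Function.Periodic u (2 * π))
    -- `u` continuous on the circle off the point `1` :
    (hcont : ContinuousOn u (Set.Ioo 0 (2 * π)))
    (hbd : ∃ M : ℝ, ∀ t, |u t| ≤ M)
    (δ t₀ : ℝ) (hδ : 0 < δ) (ht₀ : 0 < t₀) (ht₀' : t₀ < π)
    (hbig : ∀ t ∈ Set.Ioo 0 t₀, 3 * δ < u t)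
    (hsmall : ∀ t ∈ Set.Ioo 0 t₀, 0 < u (-t) ∧ u (-t) < δ) :
    Tendsto (fun r : ℝ => (2 * π)⁻¹ *
        ∫ t in (-π)..π,
          ((Complex.exp (t * Complex.I) + (r:ℂ)) /
            (Complex.exp (t * Complex.I) - (r:ℂ))).im * u t)
      (nhdsWithin 1 (Set.Iio 1)) atBot := by
  obtain ⟨M, hM⟩ := hbd
  have hM0 : 0 ≤ M := le_trans (abs_nonneg _) (hM 0)
  have hpi := Real.pi_pos
  have hu := umeas' u hper hcont
  have hc1 : Real.cos t₀ < 1 := by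
    have := Real.cos_lt_cos_of_nonneg_of_le_pi le_rfl ht₀'.le ht₀
    rwa [Real.cos_zero] at this
  set C : ℝ := -(2*δ+2*M) * Real.log (1 - Real.cos t₀) + 2*M*Real.log 4 with hC
  -- the key estimate
  have key : ∀ r ∈ Ioo (1/2 : ℝ) 1, (2 * π)⁻¹ *
        (∫ t in (-π)..π,
          ((Complex.exp (t * Complex.I) + (r:ℂ)) /
            (Complex.exp (t * Complex.I) - (r:ℂ))).im * u t)
      ≤ (2 * π)⁻¹ * (4*δ*Real.log (1-r) + C) := by
    intro r hr
    have hr0 : (0:ℝ) ≤ r := by linarith [hr.1]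
    have hr1 : r < 1 := hr.2
    have hrh : (1/2:ℝ) < r := hr.1
    set D : ℝ → ℝ := fun t => 1 - 2*r*Real.cos t + r^2 with hD
    set P : ℝ → ℝ := fun t => 2*r*Real.sin t / D t with hP
    set g : ℝ → ℝ := fun t => (-(2*r*Real.sin t)) / D t * u t with hg
    have hDpos : ∀ t, 0 < D t := Dpos' hr0 hr1
    -- rewrite the integrand
    have hrw : (∫ t in (-π)..π,
          ((Complex.exp (t * Complex.I) + (r:ℂ)) /
            (Complex.exp (t * Complex.I) - (r:ℂ))).im * u t) = ∫ t in (-π)..π, g t := by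
      apply intervalIntegral.integral_congr
      intro t _
      simp only [kernel_eq' hr0 hr1, hg]
      rfl
    rw [hrw]
    -- integrability of g on [-π, π]
    have hB : ∀ t, ‖g t‖ ≤ 2/(1-r)^2 * M := by
      intro t
      have h1 : |(-(2*r*Real.sin t)) / D t| ≤ 2/(1-r)^2 := by
        rw [abs_div, abs_of_pos (hDpos t)]
        apply div_le_div₀ (by positivity) ?_ (pow_pos (by linarith) 2) ?_
        · rw [abs_neg, abs_mul, abs_of_nonneg (by positivity : (0:ℝ) ≤ 2*r)]
          nlinarith [abs_sin_le_one t, abs_nonneg (Real.sin t)]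
        · have : D t = (1-r)^2 + 2*r*(1 - Real.cos t) := by simp only [hD]; ring
          nlinarith [Real.cos_le_one t]
      calc ‖g t‖ = |(-(2*r*Real.sin t)) / D t| * |u t| := abs_mul _ _
        _ ≤ 2/(1-r)^2 * M := mul_le_mul h1 (hM t) (abs_nonneg _) (by positivity)
    have hgm : AEStronglyMeasurable g (volume.restrict (Ioc (-π) π)) := by
      apply AEStronglyMeasurable.mul ?_ hu
      exact (Continuous.aestronglyMeasurable (by
        apply Continuous.div (by fun_prop) (by fun_prop)
        exact fun t => (hDpos t).ne'))
    have iig : IntervalIntegrable g volume (-π) π := by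
      rw [intervalIntegrable_iff_integrableOn_Ioc_of_le (by linarith)]
      exact ⟨hgm, HasFiniteIntegral.restrict_of_bounded
        (C := 2/(1-r)^2 * M) measure_Ioc_lt_top (ae_of_all _ hB)⟩
    have sub1 : IntervalIntegrable g volume (-π) 0 := by
      apply iig.mono_set
      rw [Set.uIcc_of_le (by linarith), Set.uIcc_of_le (by linarith)]
      apply Set.Icc_subset_Icc <;> linarith
    have sub2 : IntervalIntegrable g volume 0 π := by
      apply iig.mono_set
      rw [Set.uIcc_of_le (by linarith), Set.uIcc_of_le (by linarith)]
      apply Set.Icc_subset_Icc <;> linarith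
    have ign : IntervalIntegrable (fun t => g (-t)) volume 0 π := by
      have := ((IntervalIntegrable.iff_comp_neg).mp sub1)
      simpa using this.symm
    -- split the integral and substitute
    have h_split : (∫ t in (-π)..π, g t) = (∫ t in (-π)..0, g t) + ∫ t in (0:ℝ)..π, g t :=
      (intervalIntegral.integral_add_adjacent_intervals sub1 sub2).symm
    have h_neg : (∫ t in (-π)..0, g t) = ∫ t in (0:ℝ)..π, g (-t) := by
      have := intervalIntegral.integral_comp_neg (a := (0:ℝ)) (b := π) (f := g)
      simpa using this.symm
    have h_comb : (∫ t in (0:ℝ)..π, g (-t)) + (∫ t in (0:ℝ)..π, g t)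
        = ∫ t in (0:ℝ)..π, (g (-t) + g t) := (intervalIntegral.integral_add ign sub2).symm
    set F : ℝ → ℝ := fun t => P t * (u (-t) - u t) with hF
    have hFg : ∀ t, g (-t) + g t = F t := by
      intro t
      simp only [hg, hF, hP, hD, Real.sin_neg, Real.cos_neg]
      ring
    have h_toF : (∫ t in (0:ℝ)..π, (g (-t) + g t)) = ∫ t in (0:ℝ)..π, F t := by
      apply intervalIntegral.integral_congr
      intro t _
      exact hFg t
    have iF : IntervalIntegrable F volume 0 π := by
      have : IntervalIntegrable (fun t => g (-t) + g t) volume 0 π := ign.add sub2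
      exact this.congr (fun t _ => hFg t)
    have iF1 : IntervalIntegrable F volume 0 t₀ := by
      apply iF.mono_set
      rw [Set.uIcc_of_le (by linarith), Set.uIcc_of_le (by linarith)]
      apply Set.Icc_subset_Icc <;> linarith
    have iF2 : IntervalIntegrable F volume t₀ π := by
      apply iF.mono_set
      rw [Set.uIcc_of_le (by linarith), Set.uIcc_of_le (by linarith)]
      apply Set.Icc_subset_Icc <;> linarith
    have h_split2 : (∫ t in (0:ℝ)..π, F t) = (∫ t in (0:ℝ)..t₀, F t) + ∫ t in t₀..π, F t :=
      (intervalIntegral.integral_add_adjacent_intervals iF1 iF2).symm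
    -- positivity of P on [0, π]
    have hPnn : ∀ t ∈ Icc (0:ℝ) π, 0 ≤ P t := by
      intro t ht
      have : 0 ≤ Real.sin t := Real.sin_nonneg_of_nonneg_of_le_pi ht.1 ht.2
      exact div_nonneg (mul_nonneg (by linarith) this) (hDpos t).le
    -- bound on [0, t₀]
    have hb1 : (∫ t in (0:ℝ)..t₀, F t) ≤ ∫ t in (0:ℝ)..t₀, P t * (-(2*δ)) := by
      apply intervalIntegral.integral_mono_ae_restrict ht₀.le iF1
        (((Pcont' hr0 hr1).mul continuous_const).intervalIntegrable _ _)
      have hae : ∀ᵐ t ∂(volume.restrict (Icc 0 t₀)), t ∈ Ioo (0:ℝ) t₀ := by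
        rw [← Measure.restrict_congr_set Ioo_ae_eq_Icc]
        exact ae_restrict_mem measurableSet_Ioo
      filter_upwards [hae] with t ht
      have h1 : 0 ≤ P t := hPnn t ⟨ht.1.le, by linarith [ht.2]⟩
      have h2 : u (-t) - u t ≤ -(2*δ) := by
        have := hbig t ht
        have := (hsmall t ht).2
        linarith
      exact mul_le_mul_of_nonneg_left h2 h1
    -- bound on [t₀, π]
    have hb2 : (∫ t in t₀..π, F t) ≤ ∫ t in t₀..π, P t * (2*M) := by
      apply intervalIntegral.integral_mono_on ht₀'.le iF2
        (((Pcont' hr0 hr1).mul continuous_const).intervalIntegrable _ _)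
      intro t ht
      have h1 : 0 ≤ P t := hPnn t ⟨by linarith [ht.1], ht.2⟩
      have h2 : u (-t) - u t ≤ 2*M := by
        have := hM (-t); have := hM t
        have := abs_le.1 (hM (-t)); have := abs_le.1 (hM t)
        linarith
      exact mul_le_mul_of_nonneg_left h2 h1
    -- compute the majorant integrals
    have hPint : ∀ a b : ℝ, (∫ t in a..b, P t) = Real.log (D b) - Real.log (D a) := by
      intro a b
      simpa only [hP, hD] using intP' hr0 hr1 a b
    have e1 : (∫ t in (0:ℝ)..t₀, P t * (-(2*δ))) = (Real.log (D t₀) - Real.log (D 0)) * (-(2*δ)) := by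
      rw [intervalIntegral.integral_mul_const, hPint]
    have e2 : (∫ t in t₀..π, P t * (2*M)) = (Real.log (D π) - Real.log (D t₀)) * (2*M) := by
      rw [intervalIntegral.integral_mul_const, hPint]
    -- log facts
    have hD0 : D 0 = (1-r)^2 := by simp only [hD, Real.cos_zero]; ring
    have hlog0 : Real.log (D 0) = 2 * Real.log (1-r) := by
      rw [hD0, Real.log_pow]; norm_num
    have hDt₀low : 1 - Real.cos t₀ ≤ D t₀ := by
      simp only [hD]
      nlinarith [Real.cos_le_one t₀, sq_nonneg (1-r)]
    have hlogt₀ : Real.log (1 - Real.cos t₀) ≤ Real.log (D t₀) :=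
      Real.log_le_log (by linarith) hDt₀low
    have hDπ : D π ≤ 4 := by
      simp only [hD, Real.cos_pi]
      nlinarith
    have hlogπ : Real.log (D π) ≤ Real.log 4 :=
      Real.log_le_log (hDpos π) hDπ
    -- assemble
    have hI : (∫ t in (-π)..π, g t) ≤ 4*δ*Real.log (1-r) + C := by
      have q1 := hb1.trans_eq e1
      have q2 := hb2.trans_eq e2
      have p1 : -(2*δ+2*M) * Real.log (D t₀) ≤ -(2*δ+2*M) * Real.log (1 - Real.cos t₀) :=
        mul_le_mul_of_nonpos_left hlogt₀ (by linarith)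
      have p2 : 2*M*Real.log (D π) ≤ 2*M*Real.log 4 :=
        mul_le_mul_of_nonneg_left hlogπ (by linarith)
      rw [h_split, h_neg, h_comb, h_toF, h_split2, hC]
      nlinarith [q1, q2, p1, p2, hlog0]
    have h2pi : (0:ℝ) < (2*π)⁻¹ := by positivity
    exact mul_le_mul_of_nonneg_left hI h2pi.le
  -- the majorant tends to -∞
  have hmaj : Tendsto (fun r : ℝ => (2 * π)⁻¹ * (4*δ*Real.log (1-r) + C))
      (nhdsWithin 1 (Set.Iio 1)) atBot := by
    have h1 : Tendsto (fun r : ℝ => 1 - r) (nhdsWithin 1 (Set.Iio 1)) (nhdsWithin 0 (Set.Ioi 0)) := by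
      apply Filter.Tendsto.inf
      · have hct : Continuous (fun r : ℝ => 1 - r) := by fun_prop
        simpa using hct.tendsto 1
      · rw [tendsto_principal_principal]
        intro r hr
        simp only [Set.mem_Iio] at hr
        exact Set.mem_Ioi.2 (by linarith)
    have h2 : Tendsto (fun r : ℝ => Real.log (1-r)) (nhdsWithin 1 (Set.Iio 1)) atBot :=
      Real.tendsto_log_nhdsGT_zero.comp h1
    have h3 : Tendsto (fun r : ℝ => 4*δ*Real.log (1-r) + C) (nhdsWithin 1 (Set.Iio 1)) atBot := by
      apply tendsto_atBot_add_const_right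
      exact h2.const_mul_atBot (by positivity)
    exact h3.const_mul_atBot (by positivity)
  apply tendsto_atBot_mono' _ _ hmaj
  have hmem : Ioo (1/2 : ℝ) 1 ∈ nhdsWithin 1 (Set.Iio 1) :=
    Ioo_mem_nhdsLT (by norm_num)
  filter_upwards [hmem] with r hr
  exact key r hr
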